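/- (Graded Vagner–Preston theorem.) Let S be a Γ-graded inverse semigroup. Then there is a Γ-graded set X and an injective semigroup homomorphism ψ : S → I^gr(X) which is graded, i.e. ψ(S_α) ⊆ I(X)_α for all α ∈ Γ. (Concretely, one may take X = S∖{0} with its induced grading and ψ(s) the partial bijection x ↦ sx from s⁻¹sS∖{0} to ss⁻¹S∖{0}.) -/

import Mathlib

/-- A `Γ`-grading on a semigroup with zero `S`. -/
structure Grading (Γ : Type*) [Group Γ] (S : Type*) [SemigroupWithZero S] where
  deg : S → Γ
  deg_mul : ∀ s t : S, s * t ≠ 0 → deg (s * t) = deg s * deg t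

namespace Grading

variable {Γ : Type*} [Group Γ] {S : Type*} [SemigroupWithZero S]

/-- The component `S_α = φ⁻¹(α) ∪ {0}` of a `Γ`-graded semigroup. -/
def comp (g : Grading Γ S) (α : Γ) : Set S := {s | s = 0 ∨ g.deg s = α}

end Grading

/-- For a `Γ`-graded set `X` (partition map `degX : X → Γ`) the component `I(X)_α` of
the graded symmetric inverse monoid of partial bijections of `X`. -/
def IComp {Γ : Type u} [Group Γ] {X : Type v} (degX : X → Γ) (α : Γ) : Set (X ≃. X) :=
  {f | ∀ x y : X, f x = some y → degX y = α * degX x}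

section VPaux

variable {S : Type*} [SemigroupWithZero S]
variable (hinv : ∀ s : S, ∃! t : S, s * t * s = s ∧ t * s * t = t)
include hinv
open scoped Classical

noncomputable def vinv (s : S) : S := (hinv s).exists.choose

lemma vspec1 (s : S) : s * vinv hinv s * s = s := (hinv s).exists.choose_spec.1

lemma vspec2 (s : S) : vinv hinv s * s * vinv hinv s = vinv hinv s :=
  (hinv s).exists.choose_spec.2

lemma vunique {s t : S} (h1 : s * t * s = s) (h2 : t * s * t = t) : t = vinv hinv s :=
  (hinv s).unique ⟨h1, h2⟩ ⟨vspec1 hinv s, vspec2 hinv s⟩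

lemma t1 (s b : S) : s * (vinv hinv s * (s * b)) = s * b := by
  rw [← mul_assoc, ← mul_assoc, vspec1]

lemma t2 (s b : S) : vinv hinv s * (s * (vinv hinv s * b)) = vinv hinv s * b := by
  rw [← mul_assoc, ← mul_assoc, vspec2]

omit hinv in
lemma ida {e : S} (he : e * e = e) (b : S) : e * (e * b) = e * b := by
  rw [← mul_assoc, he]

lemma vinv_vinv (s : S) : vinv hinv (vinv hinv s) = s :=
  (vunique hinv (vspec2 hinv s) (vspec1 hinv s)).symm

lemma vinv_idem {e : S} (he : e * e = e) : vinv hinv e = e :=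
  (vunique hinv (by rw [he, he]) (by rw [he, he])).symm

lemma mul_idem {e f : S} (he : e * e = e) (hf : f * f = f) :
    (e * f) * (e * f) = e * f := by
  obtain ⟨x, hx⟩ : ∃ x, x = vinv hinv (e * f) := ⟨_, rfl⟩
  have h1 : (e * f) * x * (e * f) = e * f := by rw [hx]; exact vspec1 hinv (e * f)
  have h2 : x * (e * f) * x = x := by rw [hx]; exact vspec2 hinv (e * f)
  have h1' : e * (f * (x * (e * f))) = e * f := by simpa only [mul_assoc] using h1
  have h2e : x * (e * (f * (x * e))) = x * e := by
    have := congrArg (· * e) h2; simpa only [mul_assoc] using this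
  have hA : (e * f) * (f * (x * e)) * (e * f) = e * f := by
    simp only [mul_assoc]
    rw [ida hf, ida he]
    exact h1'
  have hB : (f * (x * e)) * (e * f) * (f * (x * e)) = f * (x * e) := by
    simp only [mul_assoc]
    rw [ida he, ida hf, h2e]
  have hxe : f * (x * e) = x := (vunique hinv hA hB).trans hx.symm
  have hxx : x * x = x := by
    conv_lhs => rw [← hxe]
    simp only [mul_assoc]
    rw [h2e]
    exact hxe
  have hefx : e * f = x := (vunique hinv h2 h1).trans (vinv_idem hinv hxx)
  rw [hefx]; exact hxx

lemma idem_comm {e f : S} (he : e * e = e) (hf : f * f = f) : e * f = f * e := by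
  have hef := mul_idem hinv he hf
  have hfe := mul_idem hinv hf he
  have hA : (e * f) * (f * e) * (e * f) = e * f := by
    simp only [mul_assoc] at hef ⊢
    rw [ida hf, ida he]; exact hef
  have hB : (f * e) * (e * f) * (f * e) = f * e := by
    simp only [mul_assoc] at hfe ⊢
    rw [ida he, ida hf]; exact hfe
  exact ((vunique hinv hA hB).trans (vinv_idem hinv hef)).symm

lemma comm4 (s t b : S) :
    t * (vinv hinv t * (vinv hinv s * (s * b))) =
      vinv hinv s * (s * (t * (vinv hinv t * b))) := by
  have he : (t * vinv hinv t) * (t * vinv hinv t) = t * vinv hinv t := by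
    simp only [mul_assoc]
    rw [show vinv hinv t * (t * vinv hinv t) = vinv hinv t from by
      rw [← mul_assoc]; exact vspec2 hinv t]
  have hf : (vinv hinv s * s) * (vinv hinv s * s) = vinv hinv s * s := by
    rw [mul_assoc]; exact t2 hinv s s
  have hc := idem_comm hinv he hf
  have := congrArg (· * b) hc
  simpa only [mul_assoc] using this

lemma vinv_mul (s t : S) : vinv hinv (s * t) = vinv hinv t * vinv hinv s := by
  have htt : t * (vinv hinv t * t) = t := by rw [← mul_assoc]; exact vspec1 hinv t
  have hA : (s * t) * (vinv hinv t * vinv hinv s) * (s * t) = s * t := by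
    simp only [mul_assoc]
    rw [comm4 hinv, htt]
    exact t1 hinv s t
  have hB : (vinv hinv t * vinv hinv s) * (s * t) * (vinv hinv t * vinv hinv s) =
      vinv hinv t * vinv hinv s := by
    simp only [mul_assoc]
    rw [← comm4 hinv, t2 hinv, show vinv hinv s * (s * vinv hinv s) = vinv hinv s from by
      rw [← mul_assoc]; exact vspec2 hinv s]
  exact (vunique hinv hA hB).symm

lemma vinv_ne {s : S} (hs : s ≠ 0) : vinv hinv s ≠ 0 := by
  intro h
  apply hs
  have := vspec1 hinv s
  rw [h, mul_zero, zero_mul] at this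
  exact this.symm

lemma es_ne {s : S} (hs : s ≠ 0) : vinv hinv s * s ≠ 0 := by
  intro h
  apply hs
  have := vspec1 hinv s
  rw [mul_assoc, h, mul_zero] at this
  exact this.symm

/-- The Vagner–Preston partial map associated to `s`. -/
noncomputable def vf (s : S) : {x : S // x ≠ 0} → Option {x : S // x ≠ 0} :=
  fun x =>
    if h : vinv hinv s * (s * x.1) = x.1 then
      some ⟨s * x.1, fun h0 => x.2 (by rw [h0, mul_zero] at h; exact h.symm)⟩
    else none

lemma vf_eq_some {s : S} {x y : {x : S // x ≠ 0}} :
    vf hinv s x = some y ↔ vinv hinv s * (s * x.1) = x.1 ∧ s * x.1 = y.1 := by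
  unfold vf
  split_ifs with h
  · simp [Subtype.ext_iff, h]
  · simp [h]

lemma vf_inv (s : S) (x y : {x : S // x ≠ 0}) :
    vf hinv (vinv hinv s) y = some x ↔ vf hinv s x = some y := by
  rw [vf_eq_some, vf_eq_some, vinv_vinv]
  constructor
  · rintro ⟨h1, h2⟩
    constructor
    · rw [← h2]; exact t2 hinv s y.1
    · rw [← h2]; exact h1
  · rintro ⟨h1, h2⟩
    constructor
    · rw [← h2]; exact t1 hinv s x.1
    · rw [← h2]; exact h1

/-- The Vagner–Preston partial bijection associated to `s`. -/
noncomputable def Psi (s : S) : {x : S // x ≠ 0} ≃. {x : S // x ≠ 0} :=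
  ⟨vf hinv s, vf hinv (vinv hinv s), fun a b => by
    exact vf_inv hinv s a b⟩

lemma Psi_apply (s : S) (x : {x : S // x ≠ 0}) : Psi hinv s x = vf hinv s x := rfl

lemma vf_zero (x : {x : S // x ≠ 0}) : vf hinv 0 x = none := by
  unfold vf
  rw [dif_neg]
  intro h
  rw [zero_mul, mul_zero] at h
  exact x.2 h.symm

lemma vf_dom {s : S} (hs : s ≠ 0) :
    vf hinv s ⟨vinv hinv s * s, es_ne hinv hs⟩ = some ⟨s, hs⟩ := by
  rw [vf_eq_some]
  exact ⟨t2 hinv s s, by rw [← mul_assoc]; exact vspec1 hinv s⟩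

end VPaux

/-- **Graded Vagner–Preston theorem** (Proposition `grvagnerpreston`): every `Γ`-graded
inverse semigroup embeds, via a graded injective semigroup homomorphism, into the graded
symmetric inverse monoid `I^gr(X)` of some `Γ`-graded set `X`.  Multiplication in
`I(X)` is `(φ, ψ) ↦ ψ.trans φ` (apply `ψ` first), matching `φψ` in the paper;
gradedness means `ψ(S_α) ⊆ I(X)_α` for all `α`. -/
theorem graded_vagner_preston {Γ : Type u} [Group Γ] {S : Type v} [SemigroupWithZero S]
    (g : Grading Γ S)
    (hinv : ∀ s : S, ∃! t : S, s * t * s = s ∧ t * s * t = t) :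
    ∃ (X : Type v) (degX : X → Γ) (ψ : S → (X ≃. X)),
      Function.Injective ψ ∧
      (∀ s t : S, ψ (s * t) = (ψ t).trans (ψ s)) ∧
      (∀ (α : Γ), ∀ s ∈ g.comp α, ψ s ∈ IComp degX α) := by
  refine ⟨{x : S // x ≠ 0}, fun x => g.deg x.1, Psi hinv, ?_, ?_, ?_⟩
  · -- injectivity
    intro s t h
    have hfx : ∀ x, vf hinv s x = vf hinv t x := fun x => by
      have := congrArg PEquiv.toFun h
      exact congrFun this x
    by_cases hs : s = 0
    · by_cases ht : t = 0
      · rw [hs, ht]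
      · exfalso
        have h1 := hfx ⟨vinv hinv t * t, es_ne hinv ht⟩
        rw [hs, vf_zero, vf_dom hinv ht] at h1
        exact Option.some_ne_none _ h1.symm
    · by_cases ht : t = 0
      · exfalso
        have h1 := hfx ⟨vinv hinv s * s, es_ne hinv hs⟩
        rw [ht, vf_dom hinv hs, vf_zero] at h1
        exact Option.some_ne_none _ h1
      · have h1 := hfx ⟨vinv hinv s * s, es_ne hinv hs⟩
        rw [vf_dom hinv hs, eq_comm, vf_eq_some] at h1
        obtain ⟨hd1', hv1'⟩ := h1
        have hd1 : vinv hinv t * (t * (vinv hinv s * s)) = vinv hinv s * s := hd1'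
        have hv1 : t * (vinv hinv s * s) = s := hv1'
        have h2 := hfx ⟨vinv hinv t * t, es_ne hinv ht⟩
        rw [vf_dom hinv ht, vf_eq_some] at h2
        obtain ⟨hd2', hv2'⟩ := h2
        have hd2 : vinv hinv s * (s * (vinv hinv t * t)) = vinv hinv t * t := hd2'
        have hes : (vinv hinv s * s) * (vinv hinv s * s) = vinv hinv s * s := by
          rw [mul_assoc]; exact t2 hinv s s
        have het : (vinv hinv t * t) * (vinv hinv t * t) = vinv hinv t * t := by
          rw [mul_assoc]; exact t2 hinv t t
        have hcomm := idem_comm hinv het hes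
        have hd1' : (vinv hinv t * t) * (vinv hinv s * s) = vinv hinv s * s := by
          rw [mul_assoc]; exact hd1
        have hd2' : (vinv hinv s * s) * (vinv hinv t * t) = vinv hinv t * t := by
          rw [mul_assoc]; exact hd2
        have he : vinv hinv s * s = vinv hinv t * t := by
          rw [← hd1', hcomm]; exact hd2'
        rw [he] at hv1
        rw [← hv1, ← mul_assoc]
        exact vspec1 hinv t
  · -- homomorphism
    intro s t
    apply PEquiv.ext
    intro x
    show vf hinv (s * t) x = (vf hinv t x).bind (vf hinv s)
    apply Option.ext
    intro y
    rw [vf_eq_some, Option.bind_eq_some_iff]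
    constructor
    · rintro ⟨hd, hv⟩
      rw [vinv_mul hinv] at hd
      have H : vinv hinv t * (vinv hinv s * (s * (t * x.1))) = x.1 := by
        simpa only [mul_assoc] using hd
      have htx : t * x.1 ≠ 0 := by
        intro h0
        apply x.2
        have := H
        rw [h0] at this
        simp only [mul_zero] at this
        exact this.symm
      have hz : vinv hinv t * (t * x.1) = x.1 := by
        conv_lhs => rw [← H]
        rw [t2 hinv]
        exact H
      have hsz : vinv hinv s * (s * (t * x.1)) = t * x.1 := by
        have h' := congrArg (fun z => t * z) H
        rw [comm4 hinv, hz] at h'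
        exact h'
      exact ⟨⟨t * x.1, htx⟩, by rw [vf_eq_some]; exact ⟨hz, rfl⟩,
        by rw [vf_eq_some]; exact ⟨hsz, by simpa only [mul_assoc] using hv⟩⟩
    · rintro ⟨z, hz1, hz2⟩
      rw [vf_eq_some] at hz1 hz2
      obtain ⟨hd1, hv1⟩ := hz1
      obtain ⟨hd2, hv2⟩ := hz2
      constructor
      · rw [vinv_mul hinv]
        simp only [mul_assoc]
        rw [hv1, hd2, ← hv1]
        exact hd1
      · rw [mul_assoc, hv1]
        exact hv2
  · -- gradedness
    intro α s hsα x y hxy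
    have hxy' : vf hinv s x = some y := hxy
    rw [vf_eq_some] at hxy'
    obtain ⟨hd, hv⟩ := hxy'
    rcases hsα with h0 | hdeg
    · exfalso
      rw [h0, zero_mul, mul_zero] at hd
      exact x.2 hd.symm
    · have hne : s * x.1 ≠ 0 := by rw [hv]; exact y.2
      show g.deg y.1 = α * g.deg x.1
      rw [← hv, g.deg_mul s x.1 hne, hdeg]
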